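/- Let L be an orthomodular lattice and f a conditional state on L with L_c = L∖{0}. If a ⟂ b, a ∈ L_c with f(a,1) ≠ 0, and f(b,1) = 0, then f(b, a∨b) = 0, f(a, a∨b) = 1, and consequently f(c, a∨b) = f(c,a) for every c ∈ L. -/

import Mathlib

/-- An orthomodular lattice: a bounded lattice with an orthocomplementation
satisfying `aᶜᶜ = a`, `a ⊔ aᶜ = ⊤`, antitonicity, and the orthomodular law. -/
class OML (L : Type*) extends Lattice L, BoundedOrder L, Compl L where
  compl_compl : ∀ a : L, aᶜᶜ = a
  sup_compl : ∀ a : L, a ⊔ aᶜ = ⊤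
  compl_antitone : ∀ a b : L, a ≤ b → bᶜ ≤ aᶜ
  orthomodular : ∀ a b : L, a ≤ b → b = a ⊔ (aᶜ ⊓ b)

/-- Orthogonality: `a ⟂ b` iff `a ≤ bᶜ`. -/
def Orth {L : Type*} [OML L] (a b : L) : Prop := a ≤ bᶜ

/-- A conditional state on an OML `L` with conditioning system `L_c = L \ {0}`:
for each `b ≠ ⊥`, `f(·,b)` is a state on `L` with values in `[0,1]`, `f(b,b)=1`,
and the chain rule holds over finite families of mutually orthogonal nonzero
elements. -/
structure CondState (L : Type*) [OML L] where
  f : L → L → ℝ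
  nonneg : ∀ a b, b ≠ ⊥ → 0 ≤ f a b
  le_one : ∀ a b, b ≠ ⊥ → f a b ≤ 1
  map_bot : ∀ b, b ≠ ⊥ → f ⊥ b = 0
  map_top : ∀ b, b ≠ ⊥ → f ⊤ b = 1
  add : ∀ a c b, b ≠ ⊥ → Orth a c → f (a ⊔ c) b = f a b + f c b
  diag : ∀ b, b ≠ ⊥ → f b b = 1
  chain : ∀ s : Finset L, s.Nonempty → (∀ a ∈ s, a ≠ ⊥) →
    (↑s : Set L).Pairwise Orth →
    ∀ e, f e (s.sup id) = ∑ a ∈ s, f a (s.sup id) * f e a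

lemma orth_symm {L : Type*} [OML L] {a b : L} (h : Orth a b) : Orth b a := by
  have := OML.compl_antitone a bᶜ h
  rwa [OML.compl_compl] at this

lemma le_compl_self_eq_bot {L : Type*} [OML L] {a : L} (h : a ≤ aᶜ) : a = ⊥ := by
  have h1 : aᶜ = ⊤ := by
    have := OML.sup_compl a
    rwa [sup_eq_right.mpr h] at this
  have hbot : (⊥ : L)ᶜ = ⊤ := by
    have := OML.sup_compl (⊥ : L); rwa [bot_sup_eq] at this
  have : a = ⊤ᶜ := by rw [← h1, OML.compl_compl]
  rw [this, ← hbot, OML.compl_compl]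

lemma chain_pair {L : Type*} [OML L] (F : CondState L) {x y : L}
    (hx : x ≠ ⊥) (hy : y ≠ ⊥) (hxy : Orth x y) (e : L) :
    F.f e (x ⊔ y) = F.f x (x ⊔ y) * F.f e x + F.f y (x ⊔ y) * F.f e y := by
  classical
  have hne : x ≠ y := by
    rintro rfl; exact hx (le_compl_self_eq_bot hxy)
  have hsup : ({x, y} : Finset L).sup id = x ⊔ y := by
    simp
  have hpw : (↑({x, y} : Finset L) : Set L).Pairwise Orth := by
    intro u hu v hv huv
    simp only [Finset.coe_insert, Finset.coe_singleton, Set.mem_insert_iff,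
      Set.mem_singleton_iff] at hu hv
    rcases hu with rfl | rfl <;> rcases hv with rfl | rfl
    · exact absurd rfl huv
    · exact hxy
    · exact orth_symm hxy
    · exact absurd rfl huv
  have := F.chain {x, y} ⟨x, by simp⟩ (by intro u hu; simp at hu; rcases hu with rfl | rfl <;> assumption) hpw e
  rwa [hsup, Finset.sum_pair hne] at this

theorem condState_join_null_part {L : Type*} [OML L] (F : CondState L)
    (a b : L) (hab : Orth a b) (ha : a ≠ ⊥) (ha1 : F.f a ⊤ ≠ 0)
    (hb1 : F.f b ⊤ = 0) :
    F.f b (a ⊔ b) = 0 ∧ F.f a (a ⊔ b) = 1 ∧ ∀ c : L, F.f c (a ⊔ b) = F.f c a := by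
  by_cases hb : b = ⊥
  · subst hb
    rw [sup_bot_eq]
    exact ⟨F.map_bot a ha, F.diag a ha, fun c => rfl⟩
  have htop : (⊤ : L) ≠ ⊥ := by
    intro h
    exact ha (le_bot_iff.mp (h ▸ le_top))
  set d := a ⊔ b with hd
  have hdne : d ≠ ⊥ := by
    intro h
    exact ha (le_bot_iff.mp (h ▸ le_sup_left))
  -- f d ⊤ = f a ⊤ ≠ 0
  have hdtop : F.f d ⊤ = F.f a ⊤ := by
    rw [hd, F.add a b ⊤ htop hab, hb1, add_zero]
  -- f b d = 0
  have hbd : F.f b d = 0 := by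
    by_cases hdc : dᶜ = ⊥
    · have hdt : d = ⊤ := by
        have : d = ⊥ᶜ := by rw [← hdc, OML.compl_compl]
        rw [this]
        have := OML.sup_compl (⊥ : L); rwa [bot_sup_eq] at this
      rw [hdt]; exact hb1
    · have horth : Orth d dᶜ := le_of_eq (OML.compl_compl d).symm
      have := chain_pair F hdne hdc horth b
      rw [OML.sup_compl d, hb1] at this
      have h1 : 0 ≤ F.f d ⊤ * F.f b d :=
        mul_nonneg (F.nonneg d ⊤ htop) (F.nonneg b d hdne)
      have h2 : 0 ≤ F.f dᶜ ⊤ * F.f b dᶜ :=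
        mul_nonneg (F.nonneg dᶜ ⊤ htop) (F.nonneg b dᶜ hdc)
      have hz : F.f d ⊤ * F.f b d = 0 := by linarith
      have := mul_eq_zero.mp hz
      rcases this with h | h
      · exact absurd (hdtop ▸ h) ha1
      · exact h
  have key : ∀ e, F.f e d = F.f a d * F.f e a + F.f b d * F.f e b :=
    fun e => chain_pair F ha hb hab e
  have had : F.f a d = 1 := by
    have := key ⊤
    rw [F.map_top d hdne, F.map_top a ha, F.map_top b hb, hbd] at this
    linarith
  refine ⟨hbd, had, fun c => ?_⟩
  have := key c
  rw [had, hbd] at this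
  linarith
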